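/- arXiv:0711.3632 — 4 statements merged into one kernel-verified Lean document; each statement's English description precedes it below -/
import Mathlib

section
/- Let V_p : ℝⁿ → [0,∞), p ∈ 𝒫, be continuously differentiable functions, λ₀ > 0, μ > 1, satisfying ⟨∇V_p(x), f_p(x)⟩ ≤ −λ₀ V_p(x) for all x and p, and V_{p₁}(x) ≤ μ V_{p₂}(x) for all x, p₁, p₂. Let x(·) solve the switched system ẋ = f_{σ(t)}(x) with switching instants 0 = τ₀ < τ₁ < τ₂ < ⋯ and N(t) switches on (0, t]. Then for every t ≥ 0: V_{σ(t)}(x(t)) ≤ μ^{N(t)} e^{−λ₀ t} V_{σ(0)}(x₀). -/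
open Real Set Filter

/-- Pathwise multiple-Lyapunov-function estimate: along a solution of the switched
system with switching instants `τ i` and switch count `N t`, one has
`V_{σ(t)}(x(t)) ≤ μ^{N(t)} e^{-λ₀ t} V_{σ(0)}(x₀)`. -/
theorem pathwise_lyapunov_iteration
    {n : ℕ} {P : Type*} [Finite P]
    (f : P → EuclideanSpace ℝ (Fin n) → EuclideanSpace ℝ (Fin n))
    (hf : ∀ p, LocallyLipschitz (f p))
    (V : P → EuclideanSpace ℝ (Fin n) → ℝ)
    (hVC1 : ∀ p, ContDiff ℝ 1 (V p)) (hVnonneg : ∀ p y, 0 ≤ V p y)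
    (lam₀ μ : ℝ) (hlam : 0 < lam₀) (hμ : 1 < μ)
    (hdecay : ∀ p y, fderiv ℝ (V p) y (f p y) ≤ -lam₀ * V p y)
    (hratio : ∀ p₁ p₂ y, V p₁ y ≤ μ * V p₂ y)
    (τ : ℕ → ℝ) (hτ0 : τ 0 = 0) (hτmono : StrictMono τ)
    (hτdiv : Filter.Tendsto τ Filter.atTop Filter.atTop)
    (σ : ℝ → P) (hσ : ∀ i : ℕ, ∀ t ∈ Set.Ico (τ i) (τ (i + 1)), σ t = σ (τ i))
    (N : ℝ → ℕ) (hN : ∀ t : ℝ, 0 ≤ t → τ (N t) ≤ t ∧ t < τ (N t + 1))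
    (x : ℝ → EuclideanSpace ℝ (Fin n)) (x₀ : EuclideanSpace ℝ (Fin n))
    (hx0 : x 0 = x₀) (hxcont : Continuous x)
    (hsol : ∀ t : ℝ, 0 ≤ t → t ∉ Set.range τ → HasDerivAt x (f (σ t) (x t)) t) :
    ∀ t : ℝ, 0 ≤ t →
      V (σ t) (x t) ≤ μ ^ (N t) * Real.exp (-lam₀ * t) * V (σ 0) x₀ := by
  -- Grönwall-type estimate on one switching interval
  have key : ∀ i : ℕ, ∀ t ∈ Set.Icc (τ i) (τ (i + 1)),
      V (σ (τ i)) (x t) * Real.exp (lam₀ * t)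
        ≤ V (σ (τ i)) (x (τ i)) * Real.exp (lam₀ * τ i) := by
    intro i t ht
    set p := σ (τ i) with hp
    set h : ℝ → ℝ := fun s => V p (x s) * Real.exp (lam₀ * s) with hh
    have hcont : ContinuousOn h (Set.Icc (τ i) (τ (i + 1))) := by
      apply Continuous.continuousOn
      exact ((hVC1 p).continuous.comp hxcont).mul
        (Real.continuous_exp.comp (continuous_const.mul continuous_id))
    have hτi0 : (0 : ℝ) ≤ τ i := by
      rw [← hτ0]; exact hτmono.monotone (Nat.zero_le i)
    have HDA : ∀ s ∈ Set.Ioo (τ i) (τ (i + 1)),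
        HasDerivAt h ((fderiv ℝ (V p) (x s) (f p (x s))) * Real.exp (lam₀ * s)
          + V p (x s) * (Real.exp (lam₀ * s) * lam₀)) s := by
      intro s hs
      have hs0 : (0 : ℝ) ≤ s := le_trans hτi0 hs.1.le
      have hsnr : s ∉ Set.range τ := by
        rintro ⟨j, rfl⟩
        rcases hs with ⟨h1, h2⟩
        have hij : i < j := hτmono.lt_iff_lt.mp h1
        have hji : j < i + 1 := hτmono.lt_iff_lt.mp h2
        omega
      have hσs : σ s = p := hσ i s ⟨hs.1.le, hs.2⟩
      have hx : HasDerivAt x (f p (x s)) s := by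
        have := hsol s hs0 hsnr
        rwa [hσs] at this
      have hV : HasFDerivAt (V p) (fderiv ℝ (V p) (x s)) (x s) :=
        (((hVC1 p).differentiable one_ne_zero) (x s)).hasFDerivAt
      have h1 : HasDerivAt (fun u => V p (x u)) (fderiv ℝ (V p) (x s) (f p (x s))) s :=
        hV.comp_hasDerivAt s hx
      have h2 : HasDerivAt (fun u => Real.exp (lam₀ * u)) (Real.exp (lam₀ * s) * lam₀) s := by
        simpa using ((hasDerivAt_id s).const_mul lam₀).exp
      exact h1.mul h2
    have hanti : AntitoneOn h (Set.Icc (τ i) (τ (i + 1))) := by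
      apply antitoneOn_of_deriv_nonpos (convex_Icc _ _) hcont
      · intro s hs
        rw [interior_Icc] at hs
        exact (HDA s hs).differentiableAt.differentiableWithinAt
      · intro s hs
        rw [interior_Icc] at hs
        rw [(HDA s hs).deriv]
        have hd := hdecay p (x s)
        have hE : 0 < Real.exp (lam₀ * s) := Real.exp_pos _
        nlinarith [hVnonneg p (x s)]
    have hmem : τ i ∈ Set.Icc (τ i) (τ (i + 1)) :=
      ⟨le_rfl, (hτmono (Nat.lt_succ_self i)).le⟩
    exact hanti hmem ht ht.1
  -- Iterated estimate at switching instants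
  have A : ∀ i : ℕ, V (σ (τ i)) (x (τ i)) * Real.exp (lam₀ * τ i)
      ≤ μ ^ i * V (σ 0) x₀ := by
    intro i
    induction i with
    | zero => simp [hτ0, hx0]
    | succ i ih =>
      have hb := key i (τ (i + 1)) ⟨(hτmono (Nat.lt_succ_self i)).le, le_rfl⟩
      have hr : V (σ (τ (i + 1))) (x (τ (i + 1))) ≤ μ * V (σ (τ i)) (x (τ (i + 1))) :=
        hratio _ _ _
      have hE : 0 < Real.exp (lam₀ * τ (i + 1)) := Real.exp_pos _
      have hμ0 : (0 : ℝ) < μ := lt_trans one_pos hμ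
      calc V (σ (τ (i + 1))) (x (τ (i + 1))) * Real.exp (lam₀ * τ (i + 1))
          ≤ (μ * V (σ (τ i)) (x (τ (i + 1)))) * Real.exp (lam₀ * τ (i + 1)) := by
            exact mul_le_mul_of_nonneg_right hr hE.le
        _ = μ * (V (σ (τ i)) (x (τ (i + 1))) * Real.exp (lam₀ * τ (i + 1))) := by ring
        _ ≤ μ * (V (σ (τ i)) (x (τ i)) * Real.exp (lam₀ * τ i)) :=
            mul_le_mul_of_nonneg_left hb hμ0.le
        _ ≤ μ * (μ ^ i * V (σ 0) x₀) := mul_le_mul_of_nonneg_left ih hμ0.le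
        _ = μ ^ (i + 1) * V (σ 0) x₀ := by ring
  intro t ht
  obtain ⟨h1, h2⟩ := hN t ht
  have hσt : σ t = σ (τ (N t)) := hσ (N t) t ⟨h1, h2⟩
  have hkey := key (N t) t ⟨h1, h2.le⟩
  have hA := A (N t)
  have hE : 0 < Real.exp (lam₀ * t) := Real.exp_pos _
  rw [hσt, neg_mul, Real.exp_neg,
    show μ ^ (N t) * (Real.exp (lam₀ * t))⁻¹ * V (σ 0) x₀
      = μ ^ (N t) * V (σ 0) x₀ / Real.exp (lam₀ * t) by ring, le_div_iff₀ hE]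
  exact le_trans hkey hA
end

section
/- Under the hypotheses: (i) ⟨∇V_p, f_p⟩ ≤ −λ₀ V_p for all p; (ii) V_{p₁} ≤ μ V_{p₂} pointwise for all p₁, p₂; (iii) E[μ^{N(t)}] ≤ S + e^{(μ λ̄ − λ̃)t} where S ≥ 0; and (iv) μ λ̄ − λ̃ < λ₀, we have E[V_{σ(t)}(x(t))] ≤ (S + e^{(μλ̄ − λ̃)t}) e^{−λ₀ t} V_{σ(0)}(x₀), and consequently lim_{t→∞} E[V_{σ(t)}(x(t))] = 0 and ∫_0^∞ E[V_{σ(t)}(x(t))] dt < ∞. -/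
open Real Set Filter MeasureTheory

/-- Expected Lyapunov decay: under the subsystem decay condition, the ratio condition,
a bound `E[μ^{N(t)}] ≤ S + e^{(μλ̄-λ̃)t}` on the mgf of the switch count, and the slow
switching condition `μλ̄ - λ̃ < λ₀`, one has
`E[V_{σ(t)}(x(t))] ≤ (S + e^{(μλ̄-λ̃)t}) e^{-λ₀ t} V_{σ(0)}(x₀)`, so this expectation
tends to `0` and is integrable on `[0,∞)`. -/
theorem expected_lyapunov_decay
    {n : ℕ} {P : Type*} [Finite P]
    {Ω : Type*} [MeasurableSpace Ω] (ℙ : Measure Ω) [IsProbabilityMeasure ℙ]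
    (f : P → EuclideanSpace ℝ (Fin n) → EuclideanSpace ℝ (Fin n))
    (hf : ∀ p, LocallyLipschitz (f p))
    (V : P → EuclideanSpace ℝ (Fin n) → ℝ)
    (hVC1 : ∀ p, ContDiff ℝ 1 (V p)) (hVnonneg : ∀ p y, 0 ≤ V p y)
    (lam₀ lamTilde lamBar μ S : ℝ)
    (hlam : 0 < lam₀) (hlt : 0 < lamTilde) (hlb : 0 < lamBar) (hμ : 1 < μ) (hS : 0 ≤ S)
    (hdecay : ∀ p y, fderiv ℝ (V p) y (f p y) ≤ -lam₀ * V p y)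
    (hratio : ∀ p₁ p₂ y, V p₁ y ≤ μ * V p₂ y)
    (σ : Ω → ℝ → P) (X : Ω → ℝ → EuclideanSpace ℝ (Fin n)) (N : Ω → ℝ → ℕ)
    (τ : Ω → ℕ → ℝ) (x₀ : EuclideanSpace ℝ (Fin n)) (p₀ : P)
    -- pathwise structure of the randomly switched system
    (hτ0 : ∀ ω, τ ω 0 = 0) (hτmono : ∀ ω, StrictMono (τ ω))
    (hτdiv : ∀ ω, Filter.Tendsto (τ ω) Filter.atTop Filter.atTop)
    (hσ : ∀ ω, ∀ i : ℕ, ∀ t ∈ Set.Ico (τ ω i) (τ ω (i + 1)), σ ω t = σ ω (τ ω i))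
    (hσ0 : ∀ ω, σ ω 0 = p₀)
    (hN : ∀ ω, ∀ t : ℝ, 0 ≤ t → τ ω (N ω t) ≤ t ∧ t < τ ω (N ω t + 1))
    (hx0 : ∀ ω, X ω 0 = x₀) (hxcont : ∀ ω, Continuous (X ω))
    (hsol : ∀ ω, ∀ t : ℝ, 0 ≤ t → t ∉ Set.range (τ ω) →
      HasDerivAt (X ω) (f (σ ω t) (X ω t)) t)
    -- measurability and integrability
    (hVmeas : ∀ t : ℝ, Measurable (fun ω => V (σ ω t) (X ω t)))
    (hNint : ∀ t : ℝ, 0 ≤ t → Integrable (fun ω => μ ^ (N ω t)) ℙ)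
    -- (iii): moment generating function bound
    (hmgf : ∀ t : ℝ, 0 ≤ t →
      ∫ ω, (μ : ℝ) ^ (N ω t) ∂ℙ ≤ S + Real.exp ((μ * lamBar - lamTilde) * t))
    -- (iv): slow switching
    (hslow : μ * lamBar - lamTilde < lam₀) :
    (∀ t : ℝ, 0 ≤ t →
        ∫ ω, V (σ ω t) (X ω t) ∂ℙ ≤
          (S + Real.exp ((μ * lamBar - lamTilde) * t)) * Real.exp (-lam₀ * t) * V p₀ x₀) ∧
      Filter.Tendsto (fun t => ∫ ω, V (σ ω t) (X ω t) ∂ℙ) Filter.atTop (nhds 0) ∧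
      IntegrableOn (fun t => ∫ ω, V (σ ω t) (X ω t) ∂ℙ) (Set.Ici (0:ℝ)) := by
  have hμ0 : (0:ℝ) < μ := lt_trans one_pos hμ
  have hC : 0 ≤ V p₀ x₀ := hVnonneg p₀ x₀
  have hτnn : ∀ ω i, 0 ≤ τ ω i := fun ω i => (hτ0 ω) ▸ (hτmono ω).monotone (Nat.zero_le i)
  -- no switch times inside an open inter-switch interval
  have hnoswitch : ∀ ω (i : ℕ), ∀ u ∈ Set.Ioo (τ ω i) (τ ω (i+1)), u ∉ Set.range (τ ω) := by
    rintro ω i u hu ⟨j, rfl⟩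
    rcases le_or_gt j i with hj | hj
    · exact absurd ((hτmono ω).monotone hj) (not_le.2 hu.1)
    · exact absurd ((hτmono ω).monotone (Nat.succ_le_of_lt hj)) (not_le.2 hu.2)
  -- exponential decay within one inter-switch interval
  have hdec : ∀ ω (i : ℕ) (s t : ℝ), τ ω i ≤ s → s ≤ t → t ≤ τ ω (i+1) →
      V (σ ω (τ ω i)) (X ω t) * Real.exp (lam₀ * t) ≤
        V (σ ω (τ ω i)) (X ω s) * Real.exp (lam₀ * s) := by
    intro ω i s t hs hst ht
    have key : ∀ u ∈ Set.Ioo s t,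
        HasDerivAt (fun v => V (σ ω (τ ω i)) (X ω v) * Real.exp (lam₀ * v))
          ((fderiv ℝ (V (σ ω (τ ω i))) (X ω u)) (f (σ ω (τ ω i)) (X ω u)) * Real.exp (lam₀ * u)
            + V (σ ω (τ ω i)) (X ω u) * (Real.exp (lam₀ * u) * (lam₀ * 1))) u := by
      intro u hu
      have hu1 : τ ω i < u := lt_of_le_of_lt hs hu.1
      have hu2 : u < τ ω (i+1) := lt_of_lt_of_le hu.2 ht
      have hu0 : 0 ≤ u := le_of_lt (lt_of_le_of_lt (hτnn ω i) hu1)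
      have hnr : u ∉ Set.range (τ ω) := hnoswitch ω i u ⟨hu1, hu2⟩
      have hX : HasDerivAt (X ω) (f (σ ω (τ ω i)) (X ω u)) u := by
        have h := hsol ω u hu0 hnr
        rwa [hσ ω i u ⟨le_of_lt hu1, hu2⟩] at h
      have hV : HasDerivAt (fun v => V (σ ω (τ ω i)) (X ω v))
          ((fderiv ℝ (V (σ ω (τ ω i))) (X ω u)) (f (σ ω (τ ω i)) (X ω u))) u :=
        (((hVC1 _).differentiable one_ne_zero) (X ω u)).hasFDerivAt.comp_hasDerivAt u hX
      have hE : HasDerivAt (fun v => Real.exp (lam₀ * v)) (Real.exp (lam₀ * u) * (lam₀ * 1)) u :=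
        ((hasDerivAt_id u).const_mul lam₀).exp
      exact hV.mul hE
    have hanti : AntitoneOn (fun v => V (σ ω (τ ω i)) (X ω v) * Real.exp (lam₀ * v))
        (Set.Icc s t) := by
      apply antitoneOn_of_deriv_nonpos (convex_Icc s t)
      · exact (((hVC1 _).continuous.comp (hxcont ω)).mul
          (Real.continuous_exp.comp (continuous_const.mul continuous_id))).continuousOn
      · intro u hu
        rw [interior_Icc] at hu
        exact ((key u hu).differentiableAt).differentiableWithinAt
      · intro u hu
        rw [interior_Icc] at hu
        rw [(key u hu).deriv]
        have h1 := hdecay (σ ω (τ ω i)) (X ω u)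
        have h2 := hVnonneg (σ ω (τ ω i)) (X ω u)
        have h3 := (Real.exp_pos (lam₀ * u)).le
        nlinarith [mul_le_mul_of_nonneg_right h1 h3]
    exact hanti (Set.left_mem_Icc.2 hst) (Set.right_mem_Icc.2 hst) hst
  -- inductive bound at switch times
  have hind : ∀ ω (i : ℕ),
      V (σ ω (τ ω i)) (X ω (τ ω i)) * Real.exp (lam₀ * τ ω i) ≤ μ ^ i * V p₀ x₀ := by
    intro ω i
    induction i with
    | zero => simp [hτ0, hσ0, hx0]
    | succ i ih =>
      have hle : τ ω i ≤ τ ω (i+1) := le_of_lt (hτmono ω (Nat.lt_succ_self i))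
      have h1 := hdec ω i (τ ω i) (τ ω (i+1)) le_rfl hle le_rfl
      have h2 : V (σ ω (τ ω (i+1))) (X ω (τ ω (i+1)))
          ≤ μ * V (σ ω (τ ω i)) (X ω (τ ω (i+1))) := hratio _ _ _
      calc V (σ ω (τ ω (i+1))) (X ω (τ ω (i+1))) * Real.exp (lam₀ * τ ω (i+1))
          ≤ (μ * V (σ ω (τ ω i)) (X ω (τ ω (i+1)))) * Real.exp (lam₀ * τ ω (i+1)) :=
            mul_le_mul_of_nonneg_right h2 (Real.exp_pos _).le
        _ = μ * (V (σ ω (τ ω i)) (X ω (τ ω (i+1))) * Real.exp (lam₀ * τ ω (i+1))) := by ring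
        _ ≤ μ * (V (σ ω (τ ω i)) (X ω (τ ω i)) * Real.exp (lam₀ * τ ω i)) :=
            mul_le_mul_of_nonneg_left h1 hμ0.le
        _ ≤ μ * (μ ^ i * V p₀ x₀) := mul_le_mul_of_nonneg_left ih hμ0.le
        _ = μ ^ (i+1) * V p₀ x₀ := by ring
  -- pathwise bound
  have hpath : ∀ ω (t : ℝ), 0 ≤ t →
      V (σ ω t) (X ω t) ≤ μ ^ (N ω t) * Real.exp (-lam₀ * t) * V p₀ x₀ := by
    intro ω t ht
    obtain ⟨h1, h2⟩ := hN ω t ht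
    have hσt : σ ω t = σ ω (τ ω (N ω t)) := hσ ω (N ω t) t ⟨h1, h2⟩
    have h3 := hdec ω (N ω t) (τ ω (N ω t)) t le_rfl h1 (le_of_lt h2)
    have h4 : V (σ ω (τ ω (N ω t))) (X ω t) * Real.exp (lam₀ * t) ≤ μ ^ (N ω t) * V p₀ x₀ :=
      le_trans h3 (hind ω (N ω t))
    rw [hσt]
    calc V (σ ω (τ ω (N ω t))) (X ω t)
        = (V (σ ω (τ ω (N ω t))) (X ω t) * Real.exp (lam₀ * t)) * Real.exp (-lam₀ * t) := by
          rw [mul_assoc, ← Real.exp_add, show lam₀ * t + -lam₀ * t = 0 by ring,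
            Real.exp_zero, mul_one]
      _ ≤ (μ ^ (N ω t) * V p₀ x₀) * Real.exp (-lam₀ * t) :=
          mul_le_mul_of_nonneg_right h4 (Real.exp_nonneg _)
      _ = μ ^ (N ω t) * Real.exp (-lam₀ * t) * V p₀ x₀ := by ring
  -- integrability of the Lyapunov function
  have hWint : ∀ t : ℝ, 0 ≤ t → Integrable (fun ω => V (σ ω t) (X ω t)) ℙ := by
    intro t ht
    refine ((hNint t ht).mul_const (Real.exp (-lam₀ * t) * V p₀ x₀)).mono'
      ((hVmeas t).aestronglyMeasurable) ?_
    filter_upwards with ω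
    rw [Real.norm_of_nonneg (hVnonneg _ _)]
    calc V (σ ω t) (X ω t) ≤ μ ^ (N ω t) * Real.exp (-lam₀ * t) * V p₀ x₀ := hpath ω t ht
      _ = μ ^ (N ω t) * (Real.exp (-lam₀ * t) * V p₀ x₀) := by ring
  -- Part 1: the integral bound
  have part1 : ∀ t : ℝ, 0 ≤ t →
      ∫ ω, V (σ ω t) (X ω t) ∂ℙ ≤
        (S + Real.exp ((μ * lamBar - lamTilde) * t)) * Real.exp (-lam₀ * t) * V p₀ x₀ := by
    intro t ht
    have h1 : ∫ ω, V (σ ω t) (X ω t) ∂ℙ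
        ≤ ∫ ω, μ ^ (N ω t) * (Real.exp (-lam₀ * t) * V p₀ x₀) ∂ℙ := by
      refine integral_mono (hWint t ht) ((hNint t ht).mul_const _) (fun ω => ?_)
      calc V (σ ω t) (X ω t) ≤ μ ^ (N ω t) * Real.exp (-lam₀ * t) * V p₀ x₀ := hpath ω t ht
        _ = μ ^ (N ω t) * (Real.exp (-lam₀ * t) * V p₀ x₀) := by ring
    rw [integral_mul_const] at h1
    calc ∫ ω, V (σ ω t) (X ω t) ∂ℙ
        ≤ (∫ ω, (μ:ℝ) ^ (N ω t) ∂ℙ) * (Real.exp (-lam₀ * t) * V p₀ x₀) := h1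
      _ ≤ (S + Real.exp ((μ * lamBar - lamTilde) * t)) * (Real.exp (-lam₀ * t) * V p₀ x₀) :=
          mul_le_mul_of_nonneg_right (hmgf t ht) (by positivity)
      _ = (S + Real.exp ((μ * lamBar - lamTilde) * t)) * Real.exp (-lam₀ * t) * V p₀ x₀ := by
          ring
  -- the explicit bound tends to 0
  have hFtend : Tendsto
      (fun t => (S + Real.exp ((μ * lamBar - lamTilde) * t)) * Real.exp (-lam₀ * t) * V p₀ x₀)
      atTop (nhds 0) := by
    have hmul : Tendsto (fun t : ℝ => lam₀ * t) atTop atTop :=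
      tendsto_id.const_mul_atTop hlam
    have h1 : Tendsto (fun t : ℝ => Real.exp (-lam₀ * t)) atTop (nhds 0) := by
      have h := Real.tendsto_exp_neg_atTop_nhds_zero.comp hmul
      refine h.congr (fun t => ?_)
      simp only [Function.comp_apply, neg_mul]
    have hmul2 : Tendsto (fun t : ℝ => (lam₀ - (μ * lamBar - lamTilde)) * t) atTop atTop :=
      tendsto_id.const_mul_atTop (by linarith)
    have h2 : Tendsto (fun t : ℝ => Real.exp ((μ * lamBar - lamTilde - lam₀) * t))
        atTop (nhds 0) := by
      have h := Real.tendsto_exp_neg_atTop_nhds_zero.comp hmul2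
      refine h.congr (fun t => ?_)
      simp only [Function.comp_apply]
      congr 1
      ring
    have h3 := ((h1.const_mul S).add h2).mul_const (V p₀ x₀)
    simp only [mul_zero, zero_add, add_zero, zero_mul] at h3
    refine h3.congr (fun t => ?_)
    have he : Real.exp ((μ * lamBar - lamTilde - lam₀) * t)
        = Real.exp ((μ * lamBar - lamTilde) * t) * Real.exp (-lam₀ * t) := by
      rw [← Real.exp_add]; congr 1; ring
    simp only [he]
    ring
  -- Part 2: tendsto 0
  have part2 : Tendsto (fun t => ∫ ω, V (σ ω t) (X ω t) ∂ℙ) atTop (nhds 0) := by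
    refine tendsto_of_tendsto_of_tendsto_of_le_of_le' tendsto_const_nhds hFtend ?_ ?_
    · exact Filter.Eventually.of_forall (fun t => integral_nonneg (fun ω => hVnonneg _ _))
    · filter_upwards [eventually_ge_atTop (0:ℝ)] with t ht
      exact part1 t ht
  -- monotonicity of switch count
  have hNmono : ∀ ω ⦃s u : ℝ⦄, 0 ≤ s → s ≤ u → N ω s ≤ N ω u := by
    intro ω s u hs hsu
    by_contra h
    push_neg at h
    have h1 := (hN ω s hs).1
    have h2 := (hN ω u (hs.trans hsu)).2
    have h3 : τ ω (N ω u + 1) ≤ τ ω (N ω s) := (hτmono ω).monotone (Nat.succ_le_of_lt h)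
    linarith
  -- right-continuity of the expected Lyapunov function
  have hrc : ∀ t : ℝ, 0 ≤ t →
      Tendsto (fun s => ∫ ω, V (σ ω s) (X ω s) ∂ℙ) (nhdsWithin t (Set.Ici t))
        (nhds (∫ ω, V (σ ω t) (X ω t) ∂ℙ)) := by
    intro t ht
    have hbound : Integrable (fun ω => μ ^ (N ω (t+1)) * V p₀ x₀) ℙ :=
      (hNint (t+1) (by linarith)).mul_const _
    refine tendsto_integral_filter_of_dominated_convergence _ ?_ ?_ hbound ?_
    · exact Filter.Eventually.of_forall (fun s => (hVmeas s).aestronglyMeasurable)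
    · have hmem : Set.Ico t (t+1) ∈ nhdsWithin t (Set.Ici t) := by
        rw [← Set.Ici_inter_Iio]
        exact Filter.inter_mem self_mem_nhdsWithin
          (mem_nhdsWithin_of_mem_nhds (Iio_mem_nhds (by linarith)))
      filter_upwards [hmem] with s hs
      filter_upwards with ω
      rw [Real.norm_of_nonneg (hVnonneg _ _)]
      have hs0 : 0 ≤ s := ht.trans hs.1
      have h1 := hpath ω s hs0
      have h2 : (μ:ℝ) ^ (N ω s) ≤ μ ^ (N ω (t+1)) :=
        pow_le_pow_right₀ hμ.le (hNmono ω hs0 (le_of_lt hs.2))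
      have h3 : Real.exp (-lam₀ * s) ≤ 1 := by
        rw [Real.exp_le_one_iff]
        nlinarith
      have h4 : (0:ℝ) ≤ μ ^ (N ω s) := pow_nonneg hμ0.le _
      calc V (σ ω s) (X ω s) ≤ μ ^ (N ω s) * Real.exp (-lam₀ * s) * V p₀ x₀ := h1
        _ ≤ μ ^ (N ω s) * 1 * V p₀ x₀ :=
            mul_le_mul_of_nonneg_right (mul_le_mul_of_nonneg_left h3 h4) hC
        _ = μ ^ (N ω s) * V p₀ x₀ := by ring
        _ ≤ μ ^ (N ω (t+1)) * V p₀ x₀ := mul_le_mul_of_nonneg_right h2 hC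
    · refine Filter.Eventually.of_forall (fun ω => ?_)
      obtain ⟨h1, h2⟩ := hN ω t ht
      have hmem : Set.Ico t (τ ω (N ω t + 1)) ∈ nhdsWithin t (Set.Ici t) := by
        rw [← Set.Ici_inter_Iio]
        exact Filter.inter_mem self_mem_nhdsWithin
          (mem_nhdsWithin_of_mem_nhds (Iio_mem_nhds h2))
      have hσt : σ ω t = σ ω (τ ω (N ω t)) := hσ ω (N ω t) t ⟨h1, h2⟩
      have hcont : Tendsto (fun s => V (σ ω (τ ω (N ω t))) (X ω s))
          (nhdsWithin t (Set.Ici t)) (nhds (V (σ ω (τ ω (N ω t))) (X ω t))) :=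
        (((hVC1 _).continuous.comp (hxcont ω)).tendsto t).mono_left nhdsWithin_le_nhds
      rw [hσt]
      refine hcont.congr' ?_
      filter_upwards [hmem] with s hs
      rw [hσ ω (N ω t) s ⟨h1.trans hs.1, hs.2⟩]
  -- measurability of the expected Lyapunov function on [0,∞)
  have hgmeas : AEStronglyMeasurable (fun t => ∫ ω, V (σ ω t) (X ω t) ∂ℙ)
      (volume.restrict (Set.Ici (0:ℝ))) := by
    set g : ℝ → ℝ := fun t => ∫ ω, V (σ ω t) (X ω t) ∂ℙ with hg
    have hmeasn : ∀ m : ℕ, Measurable (fun t : ℝ => g ((⌊t * (m+1)⌋ + 1) / (m+1))) := by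
      intro m
      have h1 : Measurable (fun t : ℝ => (⌊t * (m+1)⌋ : ℤ)) :=
        Int.measurable_floor.comp (measurable_id.mul_const _)
      exact (Measurable.of_discrete (f := fun k : ℤ => g ((k+1) / (m+1)))).comp h1
    have hae : AEMeasurable g (volume.restrict (Set.Ici (0:ℝ))) := by
      apply aemeasurable_of_tendsto_metrizable_ae atTop (fun m => (hmeasn m).aemeasurable)
      filter_upwards [ae_restrict_mem measurableSet_Ici] with t ht
      have hu : Tendsto (fun m : ℕ => ((⌊t * ((m:ℝ)+1)⌋ : ℝ) + 1) / ((m:ℝ)+1)) atTop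
          (nhdsWithin t (Set.Ici t)) := by
        have hlb : ∀ m : ℕ, t ≤ ((⌊t * ((m:ℝ)+1)⌋ : ℝ) + 1) / ((m:ℝ)+1) := by
          intro m
          rw [le_div_iff₀ (by positivity)]
          have := Int.lt_floor_add_one (t * ((m:ℝ)+1))
          linarith
        have hub : ∀ m : ℕ, ((⌊t * ((m:ℝ)+1)⌋ : ℝ) + 1) / ((m:ℝ)+1) ≤ t + 1/((m:ℝ)+1) := by
          intro m
          rw [div_le_iff₀ (by positivity)]
          have h := Int.floor_le (t * ((m:ℝ)+1))
          have hm : ((m:ℝ)+1) ≠ 0 := by positivity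
          calc ((⌊t * ((m:ℝ)+1)⌋ : ℝ) + 1) ≤ t * ((m:ℝ)+1) + 1 := by linarith
            _ = (t + 1/((m:ℝ)+1)) * ((m:ℝ)+1) := by field_simp
        have htend : Tendsto (fun m : ℕ => ((⌊t * ((m:ℝ)+1)⌋ : ℝ) + 1) / ((m:ℝ)+1))
            atTop (nhds t) := by
          refine tendsto_of_tendsto_of_tendsto_of_le_of_le
            (tendsto_const_nhds (x := t)) ?_ hlb hub
          have h := tendsto_const_nhds (x := t) |>.add tendsto_one_div_add_atTop_nhds_zero_nat
          simpa using h
        exact tendsto_nhdsWithin_of_tendsto_nhds_of_eventually_within _ htend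
          (Filter.Eventually.of_forall hlb)
      exact (hrc t ht).comp hu
    exact hae.aestronglyMeasurable
  -- integrability of the explicit bound
  have hFint : IntegrableOn
      (fun t => (S + Real.exp ((μ * lamBar - lamTilde) * t)) * Real.exp (-lam₀ * t) * V p₀ x₀)
      (Set.Ici (0:ℝ)) := by
    have h1 : IntegrableOn (fun t => Real.exp (-lam₀ * t)) (Set.Ici (0:ℝ)) :=
      (integrableOn_Ici_iff_integrableOn_Ioi enorm_ne_top).2 (exp_neg_integrableOn_Ioi 0 hlam)
    have h2 : IntegrableOn (fun t => Real.exp (-(lam₀ - (μ * lamBar - lamTilde)) * t))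
        (Set.Ici (0:ℝ)) :=
      (integrableOn_Ici_iff_integrableOn_Ioi enorm_ne_top).2 (exp_neg_integrableOn_Ioi 0 (by linarith))
    have h3 := (h1.const_mul (S * V p₀ x₀)).add (h2.const_mul (V p₀ x₀))
    refine h3.congr (Filter.Eventually.of_forall (fun t => ?_))
    have he : Real.exp (-(lam₀ - (μ * lamBar - lamTilde)) * t)
        = Real.exp ((μ * lamBar - lamTilde) * t) * Real.exp (-lam₀ * t) := by
      rw [← Real.exp_add]; congr 1; ring
    simp only [Pi.add_apply, he]
    ring
  -- Part 3: integrable on [0,∞)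
  refine ⟨part1, part2, ?_⟩
  refine hFint.mono' hgmeas ?_
  filter_upwards [ae_restrict_mem measurableSet_Ici] with t ht
  rw [Real.norm_of_nonneg (integral_nonneg (fun ω => hVnonneg _ _))]
  exact part1 t ht
end

section
/- Consider ẋ = f_{σ(t)}(x), x(0) = x₀, with finite index set 𝒫 and locally Lipschitz f_p, f_p(0)=0. Suppose there exist C¹ functions V_p : ℝⁿ → [0,∞), class-K∞ functions α₁, α₂, and reals λ̃, λ̄, λ₀ > 0, μ > 1, M ∈ ℕ∪{0} such that: (i) α₁(‖x‖) ≤ V_p(x) ≤ α₂(‖x‖); (ii) ⟨∇V_p(x), f_p(x)⟩ ≤ −λ₀ V_p(x); (iii) V_{p₁}(x) ≤ μ V_{p₂}(x); (iv) P(N_σ(t) = k) ≤ e^{−λ̃t}(λ̄t)^k/k! for k ≥ M; (v) μ < (λ₀ + λ̃)/λ̄. Then almost surely lim_{t→∞} x(t) = 0 (almost sure global asymptotic convergence). -/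
open Real Set Filter MeasureTheory

lemma intervalDecay {E : Type*} [NormedAddCommGroup E] [NormedSpace ℝ E]
    (V : E → ℝ) (hV : ContDiff ℝ 1 V) (fp : E → E)
    (x : ℝ → E) (hx : Continuous x) (lam₀ : ℝ)
    (a b : ℝ) (hab : a ≤ b)
    (hderiv : ∀ t ∈ Set.Ioo a b, HasDerivAt x (fp (x t)) t)
    (hdec : ∀ y, fderiv ℝ V y (fp y) ≤ -lam₀ * V y) :
    ∀ t ∈ Set.Icc a b, V (x t) ≤ V (x a) * Real.exp (-lam₀ * (t - a)) := by
  have hVd : Differentiable ℝ V := hV.differentiable one_ne_zero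
  set g : ℝ → ℝ := fun t => V (x t) * Real.exp (lam₀ * t) with hg
  have hgd : ∀ t ∈ Set.Ioo a b, HasDerivAt g
      ((fderiv ℝ V (x t) (fp (x t))) * Real.exp (lam₀ * t)
        + V (x t) * (lam₀ * Real.exp (lam₀ * t))) t := by
    intro t ht
    have h1 : HasDerivAt (fun t => V (x t)) (fderiv ℝ V (x t) (fp (x t))) t :=
      ((hVd (x t)).hasFDerivAt).comp_hasDerivAt t (hderiv t ht)
    have h2 : HasDerivAt (fun t => Real.exp (lam₀ * t)) (lam₀ * Real.exp (lam₀ * t)) t := by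
      have := (Real.hasDerivAt_exp (lam₀ * t)).comp t ((hasDerivAt_id t).const_mul lam₀)
      simpa [mul_comm, Function.comp_def] using this
    exact h1.mul h2
  have hanti : AntitoneOn g (Set.Icc a b) := by
    apply antitoneOn_of_deriv_nonpos (convex_Icc a b)
    · exact ((hVd.continuous.comp hx).mul
        (Real.continuous_exp.comp (continuous_const.mul continuous_id))).continuousOn
    · intro t ht
      rw [interior_Icc] at ht
      exact (hgd t ht).differentiableAt.differentiableWithinAt
    · intro t ht
      rw [interior_Icc] at ht
      rw [(hgd t ht).deriv]
      have hd := hdec (x t)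
      have he : (0:ℝ) < Real.exp (lam₀ * t) := Real.exp_pos _
      nlinarith
  intro t ht
  have h := hanti (Set.left_mem_Icc.2 hab) ht ht.1
  have he : (0:ℝ) < Real.exp (lam₀ * t) := Real.exp_pos _
  have hkey : V (x t) * Real.exp (lam₀ * t) ≤ V (x a) * Real.exp (lam₀ * a) := h
  have : Real.exp (-lam₀ * (t - a)) = Real.exp (lam₀ * a) / Real.exp (lam₀ * t) := by
    rw [eq_div_iff (ne_of_gt (Real.exp_pos _)), ← Real.exp_add]; ring_nf
  rw [this, mul_div_assoc', le_div_iff₀ he]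
  exact hkey

lemma pathwiseBound {E : Type*} [NormedAddCommGroup E] [NormedSpace ℝ E] {P : Type*}
    (V : P → E → ℝ) (hVC1 : ∀ p, ContDiff ℝ 1 (V p)) (f : P → E → E)
    (lam₀ μ : ℝ) (hμ : 1 < μ)
    (hdecay : ∀ p y, fderiv ℝ (V p) y (f p y) ≤ -lam₀ * V p y)
    (hratio : ∀ p₁ p₂ y, V p₁ y ≤ μ * V p₂ y)
    (hVnn : ∀ p y, 0 ≤ V p y)
    (τ : ℕ → ℝ) (hτ0 : τ 0 = 0) (hτm : StrictMono τ)
    (s : ℝ → P) (hs : ∀ i : ℕ, ∀ t ∈ Set.Ico (τ i) (τ (i+1)), s t = s (τ i))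
    (x : ℝ → E) (hx : Continuous x)
    (hsol : ∀ t : ℝ, 0 ≤ t → t ∉ Set.range τ → HasDerivAt x (f (s t) (x t)) t) :
    ∀ i : ℕ, ∀ t, τ i ≤ t → t ≤ τ (i+1) →
      V (s (τ i)) (x t) ≤ μ ^ i * Real.exp (-lam₀ * t) * V (s 0) (x 0) := by
  have hτnn : ∀ i : ℕ, 0 ≤ τ i := fun i => hτ0 ▸ hτm.monotone (Nat.zero_le i)
  have key : ∀ i : ℕ, ∀ t ∈ Set.Icc (τ i) (τ (i+1)),
      V (s (τ i)) (x t) ≤ V (s (τ i)) (x (τ i)) * Real.exp (-lam₀ * (t - τ i)) := by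
    intro i
    apply intervalDecay (V (s (τ i))) (hVC1 _) (f (s (τ i))) x hx lam₀ _ _
      (le_of_lt (hτm (Nat.lt_succ_self i)))
    · intro t ht
      have hnr : t ∉ Set.range τ := by
        rintro ⟨j, rfl⟩
        rcases lt_or_ge i j with h | h
        · exact absurd (hτm.monotone (Nat.succ_le_of_lt h)) (not_le.2 ht.2)
        · exact absurd (hτm.monotone h) (not_le.2 ht.1)
      have hst : s t = s (τ i) := hs i t ⟨le_of_lt ht.1, ht.2⟩
      have := hsol t (le_trans (hτnn i) (le_of_lt ht.1)) hnr
      rwa [hst] at this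
    · exact hdecay _
  intro i
  induction i with
  | zero =>
    intro t h1 h2
    have := key 0 t ⟨h1, h2⟩
    rw [hτ0] at this ⊢
    simpa [mul_comm] using this
  | succ i ih =>
    intro t h1 h2
    have hWi : V (s (τ i)) (x (τ (i+1))) ≤ μ ^ i * Real.exp (-lam₀ * τ (i+1)) * V (s 0) (x 0) :=
      ih (τ (i+1)) (le_of_lt (hτm (Nat.lt_succ_self i))) le_rfl
    have hjump : V (s (τ (i+1))) (x (τ (i+1))) ≤ μ * V (s (τ i)) (x (τ (i+1))) := hratio _ _ _
    have hdec := key (i+1) t ⟨h1, h2⟩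
    have hμ0 : (0:ℝ) < μ := lt_trans one_pos hμ
    have he1 : (0:ℝ) < Real.exp (-lam₀ * (t - τ (i+1))) := Real.exp_pos _
    have hexp : Real.exp (-lam₀ * τ (i+1)) * Real.exp (-lam₀ * (t - τ (i+1)))
        = Real.exp (-lam₀ * t) := by rw [← Real.exp_add]; ring_nf
    have hV0 : 0 ≤ V (s 0) (x 0) := hVnn _ _
    calc V (s (τ (i+1))) (x t)
        ≤ V (s (τ (i+1))) (x (τ (i+1))) * Real.exp (-lam₀ * (t - τ (i+1))) := hdec
      _ ≤ (μ * V (s (τ i)) (x (τ (i+1)))) * Real.exp (-lam₀ * (t - τ (i+1))) := by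
          apply mul_le_mul_of_nonneg_right hjump he1.le
      _ ≤ (μ * (μ ^ i * Real.exp (-lam₀ * τ (i+1)) * V (s 0) (x 0)))
            * Real.exp (-lam₀ * (t - τ (i+1))) := by
          apply mul_le_mul_of_nonneg_right _ he1.le
          exact mul_le_mul_of_nonneg_left hWi hμ0.le
      _ = μ ^ (i+1) * (Real.exp (-lam₀ * τ (i+1)) * Real.exp (-lam₀ * (t - τ (i+1))))
            * V (s 0) (x 0) := by ring
      _ = μ ^ (i+1) * Real.exp (-lam₀ * t) * V (s 0) (x 0) := by rw [hexp]

lemma tail_exp_bound (c : ℝ) (hc : 0 ≤ c) (K : ℕ) :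
    ∑' j : ℕ, c ^ (K + j) / ((K + j).factorial : ℝ) ≤ Real.exp c := by
  have hs : Summable (fun n : ℕ => c ^ n / (n.factorial : ℝ)) :=
    Real.summable_pow_div_factorial c
  have hsc : Summable (fun j : ℕ => c ^ (K + j) / ((K + j).factorial : ℝ)) :=
    hs.comp_injective (add_right_injective K)
  have hexp : Real.exp c = ∑' n : ℕ, c ^ n / (n.factorial : ℝ) := by
    rw [Real.exp_eq_exp_ℝ, NormedSpace.exp_eq_tsum_div]
  rw [hexp]
  exact Summable.tsum_le_tsum_of_inj (fun j => K + j) (add_right_injective K)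
    (fun i _ => by positivity) (fun j => le_rfl) hsc hs

/-- Main theorem (convergence part of GAS a.s.): under the multiple Lyapunov function
conditions (i)-(iii), the pmf tail bound (iv) on the switch count, and the slow
switching condition (v) `μ < (λ₀+λ̃)/λ̄`, the trajectory of the randomly switched
system converges to `0` almost surely. -/
theorem randomly_switched_as_convergence
    {n : ℕ} {P : Type*} [Finite P]
    {Ω : Type*} [MeasurableSpace Ω] (ℙ : Measure Ω) [IsProbabilityMeasure ℙ]
    (f : P → EuclideanSpace ℝ (Fin n) → EuclideanSpace ℝ (Fin n))
    (hf : ∀ p, LocallyLipschitz (f p)) (hf0 : ∀ p, f p 0 = 0)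
    (V : P → EuclideanSpace ℝ (Fin n) → ℝ)
    (hVC1 : ∀ p, ContDiff ℝ 1 (V p))
    (α₁ α₂ : ℝ → ℝ)
    (hα₁cont : Continuous α₁) (hα₁mono : StrictMonoOn α₁ (Set.Ici 0))
    (hα₁0 : α₁ 0 = 0) (hα₁inf : Filter.Tendsto α₁ Filter.atTop Filter.atTop)
    (hα₂cont : Continuous α₂) (hα₂mono : StrictMonoOn α₂ (Set.Ici 0))
    (hα₂0 : α₂ 0 = 0) (hα₂inf : Filter.Tendsto α₂ Filter.atTop Filter.atTop)
    (lam₀ lamTilde lamBar μ : ℝ) (M : ℕ)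
    (hlam : 0 < lam₀) (hlt : 0 < lamTilde) (hlb : 0 < lamBar) (hμ : 1 < μ)
    -- (i) class-K∞ sandwich
    (hsandwich : ∀ p y, α₁ ‖y‖ ≤ V p y ∧ V p y ≤ α₂ ‖y‖)
    -- (ii) decay of each subsystem
    (hdecay : ∀ p y, fderiv ℝ (V p) y (f p y) ≤ -lam₀ * V p y)
    -- (iii) ratio bound
    (hratio : ∀ p₁ p₂ y, V p₁ y ≤ μ * V p₂ y)
    -- the randomly switched system and its sample-path structure
    (σ : Ω → ℝ → P) (X : Ω → ℝ → EuclideanSpace ℝ (Fin n)) (N : Ω → ℝ → ℕ)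
    (τ : Ω → ℕ → ℝ) (x₀ : EuclideanSpace ℝ (Fin n))
    (hτ0 : ∀ ω, τ ω 0 = 0) (hτmono : ∀ ω, StrictMono (τ ω))
    (hτdiv : ∀ ω, Filter.Tendsto (τ ω) Filter.atTop Filter.atTop)
    (hσ : ∀ ω, ∀ i : ℕ, ∀ t ∈ Set.Ico (τ ω i) (τ ω (i + 1)), σ ω t = σ ω (τ ω i))
    (hN : ∀ ω, ∀ t : ℝ, 0 ≤ t → τ ω (N ω t) ≤ t ∧ t < τ ω (N ω t + 1))
    (hx0 : ∀ ω, X ω 0 = x₀) (hxcont : ∀ ω, Continuous (X ω))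
    (hsol : ∀ ω, ∀ t : ℝ, 0 ≤ t → t ∉ Set.range (τ ω) →
      HasDerivAt (X ω) (f (σ ω t) (X ω t)) t)
    (hNmeas : ∀ t : ℝ, Measurable (fun ω => N ω t))
    (hVmeas : ∀ t : ℝ, Measurable (fun ω => V (σ ω t) (X ω t)))
    -- (iv) pmf tail bound on the switch count
    (hpmf : ∀ t : ℝ, 0 ≤ t → ∀ k : ℕ, M ≤ k →
      ℙ {ω | N ω t = k} ≤
        ENNReal.ofReal (Real.exp (-lamTilde * t) * (lamBar * t) ^ k / (Nat.factorial k)))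
    -- (v) slow switching
    (hslow : μ < (lam₀ + lamTilde) / lamBar) :
    ∀ᵐ ω ∂ℙ, Filter.Tendsto (fun t => X ω t) Filter.atTop (nhds 0) := by
  classical
  have hμ0 : (0:ℝ) < μ := lt_trans one_pos hμ
  have hα₁nn : ∀ r : ℝ, 0 ≤ r → 0 ≤ α₁ r := by
    intro r hr
    have := hα₁mono.monotoneOn (Set.mem_Ici.2 le_rfl) (Set.mem_Ici.2 hr) hr
    rwa [hα₁0] at this
  have hVnn : ∀ p y, 0 ≤ V p y := fun p y =>
    le_trans (hα₁nn ‖y‖ (norm_nonneg y)) (hsandwich p y).1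
  set C := α₂ ‖x₀‖ with hC
  have hCnn : 0 ≤ C := by
    have := hα₂mono.monotoneOn (Set.mem_Ici.2 le_rfl) (Set.mem_Ici.2 (norm_nonneg x₀))
      (norm_nonneg x₀)
    rw [hα₂0] at this; exact this
  -- pathwise Lyapunov bound
  have hPW : ∀ ω, ∀ t : ℝ, 0 ≤ t →
      V (σ ω t) (X ω t) ≤ μ ^ (N ω t) * Real.exp (-lam₀ * t) * C := by
    intro ω t ht
    obtain ⟨h1, h2⟩ := hN ω t ht
    have hσt : σ ω t = σ ω (τ ω (N ω t)) := hσ ω (N ω t) t ⟨h1, h2⟩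
    have hbd := pathwiseBound V hVC1 f lam₀ μ hμ hdecay hratio hVnn (τ ω) (hτ0 ω)
      (hτmono ω) (σ ω) (hσ ω) (X ω) (hxcont ω) (hsol ω) (N ω t) t h1 h2.le
    rw [hσt]
    have hV0 : V (σ ω 0) (X ω 0) ≤ C := by rw [hx0 ω]; exact (hsandwich _ _).2
    calc V (σ ω (τ ω (N ω t))) (X ω t)
        ≤ μ ^ (N ω t) * Real.exp (-lam₀ * t) * V (σ ω 0) (X ω 0) := hbd
      _ ≤ μ ^ (N ω t) * Real.exp (-lam₀ * t) * C := by
          apply mul_le_mul_of_nonneg_left hV0 (by positivity)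
  -- monotonicity of the switch count
  have hNmono : ∀ ω, ∀ s t : ℝ, 0 ≤ s → s ≤ t → N ω s ≤ N ω t := by
    intro ω s t hs hst
    by_contra h
    push_neg at h
    have h1 : N ω t + 1 ≤ N ω s := h
    have h2 := (hτmono ω).monotone h1
    have h3 := (hN ω s hs).1
    have h4 := (hN ω t (hs.trans hst)).2
    linarith
  -- parameters
  have hμb : μ * lamBar < lam₀ + lamTilde := (lt_div_iff₀ hlb).1 hslow
  set θ := (max (μ * lamBar - lamTilde) 0 + lam₀) / 2 with hθdef
  have hmax0 : (0:ℝ) ≤ max (μ * lamBar - lamTilde) 0 := le_max_right _ _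
  have hmaxlt : max (μ * lamBar - lamTilde) 0 < lam₀ := max_lt (by linarith) hlam
  have hθ1 : 0 < θ := by rw [hθdef]; linarith
  have hθ2 : θ < lam₀ := by rw [hθdef]; linarith
  have hθ3 : μ * lamBar - lamTilde < θ := by
    have := le_max_left (μ * lamBar - lamTilde) 0
    rw [hθdef]; linarith
  have hln : 0 < Real.log μ := Real.log_pos hμ
  set K : ℕ → ℕ := fun m => max M (⌊θ * m / Real.log μ⌋₊ + 1) with hK
  set A : ℕ → Set Ω := fun m => {ω | K m ≤ N ω (m : ℝ)} with hA
  -- tail bound on the bad events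
  have hAm : ∀ m : ℕ, ℙ (A m) ≤
      ENNReal.ofReal (Real.exp ((μ * lamBar - lamTilde - θ) * m)) := by
    intro m
    have hm0 : (0:ℝ) ≤ (m:ℝ) := Nat.cast_nonneg m
    have hc0 : (0:ℝ) ≤ μ * lamBar * m := by positivity
    have hμK : Real.exp (θ * m) ≤ μ ^ (K m) := by
      have h1 : θ * m / Real.log μ < (⌊θ * m / Real.log μ⌋₊ : ℝ) + 1 :=
        Nat.lt_floor_add_one _
      have h2 : ((⌊θ * m / Real.log μ⌋₊ + 1 : ℕ) : ℝ) ≤ (K m : ℝ) := by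
        exact_mod_cast le_max_right M _
      have h3 : θ * m ≤ (K m : ℝ) * Real.log μ := by
        have hle : θ * m / Real.log μ ≤ (K m : ℝ) := by
          refine h1.le.trans ?_
          push_cast at h2 ⊢
          linarith
        calc θ * m = (θ * m / Real.log μ) * Real.log μ := by field_simp
          _ ≤ (K m : ℝ) * Real.log μ := mul_le_mul_of_nonneg_right hle hln.le
      calc Real.exp (θ * m) ≤ Real.exp ((K m : ℝ) * Real.log μ) := Real.exp_le_exp.2 h3
        _ = μ ^ (K m) := by rw [Real.exp_nat_mul, Real.exp_log hμ0]
    have hsubset : A m ⊆ ⋃ j : ℕ, {ω | N ω (m:ℝ) = K m + j} := by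
      intro ω hω
      simp only [hA, Set.mem_setOf_eq] at hω
      exact Set.mem_iUnion.2 ⟨N ω (m:ℝ) - K m, by simp only [Set.mem_setOf_eq]; omega⟩
    have hle1 : ℙ (A m) ≤ ∑' j : ℕ, ℙ {ω | N ω (m:ℝ) = K m + j} :=
      (measure_mono hsubset).trans (measure_iUnion_le _)
    set b : ℕ → ℝ := fun j => Real.exp (-lamTilde * m) * Real.exp (-(θ * m)) *
      ((μ * lamBar * m) ^ (K m + j) / ((K m + j).factorial : ℝ)) with hb
    have hbnn : ∀ j, 0 ≤ b j := fun j => by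
      rw [hb]; positivity
    have hbsum : Summable b := by
      apply Summable.mul_left
      exact (Real.summable_pow_div_factorial _).comp_injective (add_right_injective (K m))
    have hterm : ∀ j : ℕ, ℙ {ω | N ω (m:ℝ) = K m + j} ≤ ENNReal.ofReal (b j) := by
      intro j
      have hMle : M ≤ K m + j := le_trans (le_max_left _ _) (Nat.le_add_right _ _)
      refine (hpmf m hm0 (K m + j) hMle).trans (ENNReal.ofReal_le_ofReal ?_)
      simp only [hb]
      have heθ : (0:ℝ) < Real.exp (θ * m) := Real.exp_pos _
      have hpow : (lamBar * m) ^ (K m + j) * Real.exp (θ * m)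
          ≤ (μ * lamBar * m) ^ (K m + j) := by
        have h1 : Real.exp (θ * m) ≤ μ ^ (K m + j) :=
          hμK.trans (pow_le_pow_right₀ hμ.le (Nat.le_add_right _ _))
        calc (lamBar * m) ^ (K m + j) * Real.exp (θ * m)
            ≤ (lamBar * m) ^ (K m + j) * μ ^ (K m + j) :=
              mul_le_mul_of_nonneg_left h1 (by positivity)
          _ = (μ * lamBar * m) ^ (K m + j) := by
              rw [← mul_pow]; ring_nf
      have key : (lamBar * m) ^ (K m + j) ≤
          Real.exp (-(θ * m)) * (μ * lamBar * m) ^ (K m + j) := by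
        rw [Real.exp_neg, inv_mul_eq_div, le_div_iff₀ heθ]
        exact hpow
      have hrw : Real.exp (-lamTilde * m) * Real.exp (-(θ * m)) *
          ((μ * lamBar * m) ^ (K m + j) / ((K m + j).factorial : ℝ))
          = Real.exp (-lamTilde * m) *
            (Real.exp (-(θ * m)) * (μ * lamBar * m) ^ (K m + j)) /
            ((K m + j).factorial : ℝ) := by ring
      rw [hrw]
      gcongr
    have hle2 : (∑' j : ℕ, ℙ {ω | N ω (m:ℝ) = K m + j}) ≤ ∑' j, ENNReal.ofReal (b j) :=
      ENNReal.tsum_le_tsum hterm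
    have hle3 : (∑' j, ENNReal.ofReal (b j)) = ENNReal.ofReal (∑' j, b j) :=
      (ENNReal.ofReal_tsum_of_nonneg hbnn hbsum).symm
    have hle4 : (∑' j, b j) ≤ Real.exp ((μ * lamBar - lamTilde - θ) * m) := by
      rw [hb, tsum_mul_left]
      have htail := tail_exp_bound (μ * lamBar * m) hc0 (K m)
      calc Real.exp (-lamTilde * m) * Real.exp (-(θ * m)) *
            ∑' j : ℕ, (μ * lamBar * m) ^ (K m + j) / ((K m + j).factorial : ℝ)
          ≤ Real.exp (-lamTilde * m) * Real.exp (-(θ * m)) * Real.exp (μ * lamBar * m) :=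
            mul_le_mul_of_nonneg_left htail (by positivity)
        _ = Real.exp ((μ * lamBar - lamTilde - θ) * m) := by
            rw [← Real.exp_add, ← Real.exp_add]; ring_nf
    exact hle1.trans (hle2.trans (hle3 ▸ ENNReal.ofReal_le_ofReal hle4))
  -- Borel–Cantelli
  have hr1 : Real.exp (μ * lamBar - lamTilde - θ) < 1 := by
    rw [Real.exp_lt_one_iff]; linarith
  have hAm' : ∀ m : ℕ, ℙ (A m) ≤ (ENNReal.ofReal (Real.exp (μ * lamBar - lamTilde - θ))) ^ m := by
    intro m
    refine (hAm m).trans_eq ?_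
    rw [mul_comm, Real.exp_nat_mul, ENNReal.ofReal_pow (Real.exp_nonneg _)]
  have htsum : (∑' m, ℙ (A m)) ≠ ⊤ := by
    apply ne_top_of_le_ne_top _ (ENNReal.tsum_le_tsum hAm')
    rw [ENNReal.tsum_geometric]
    have hrlt : ENNReal.ofReal (Real.exp (μ * lamBar - lamTilde - θ)) < 1 :=
      ENNReal.ofReal_lt_one.2 hr1
    exact ENNReal.inv_ne_top.2 (tsub_pos_of_lt hrlt).ne'
  have hBC : ℙ (limsup A atTop) = 0 := measure_limsup_atTop_eq_zero htsum
  rw [measure_eq_zero_iff_ae_notMem] at hBC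
  filter_upwards [hBC] with ω hω
  rw [mem_limsup_iff_frequently_mem, Filter.not_frequently] at hω
  obtain ⟨m₀, hm₀⟩ := (Filter.eventually_atTop).1 hω
  -- pathwise convergence
  set D := C * μ ^ M * Real.exp θ with hD
  have hbound : ∀ᶠ t : ℝ in atTop, α₁ ‖X ω t‖ ≤ D * Real.exp (-((lam₀ - θ) * t)) := by
    filter_upwards [eventually_ge_atTop (m₀ : ℝ), eventually_ge_atTop (0:ℝ)] with t htm ht0
    set m := ⌊t⌋₊ with hm
    have hmge : m₀ ≤ m + 1 := by
      have : m₀ ≤ m := Nat.le_floor htm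
      omega
    have htm1 : t ≤ ((m + 1 : ℕ) : ℝ) := by
      push_cast
      exact (Nat.lt_floor_add_one t).le
    have hNle : N ω t ≤ N ω ((m + 1 : ℕ) : ℝ) := hNmono ω t _ ht0 htm1
    have hNK : ¬ (K (m+1) ≤ N ω ((m + 1 : ℕ) : ℝ)) := by
      have := hm₀ (m+1) hmge
      simp only [hA, Set.mem_setOf_eq] at this
      exact this
    have hNlt : N ω ((m + 1 : ℕ) : ℝ) < K (m+1) := not_le.1 hNK
    have hKle : K (m+1) ≤ M + (⌊θ * ((m+1 : ℕ) : ℝ) / Real.log μ⌋₊ + 1) := by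
      rw [hK]
      exact max_le (Nat.le_add_right _ _) (Nat.le_add_left _ _)
    have hNle2 : N ω t ≤ M + ⌊θ * ((m+1 : ℕ) : ℝ) / Real.log μ⌋₊ := by omega
    have hfl : (⌊θ * ((m+1 : ℕ) : ℝ) / Real.log μ⌋₊ : ℝ) * Real.log μ ≤ θ * ((m+1 : ℕ) : ℝ) := by
      have h := Nat.floor_le (show (0:ℝ) ≤ θ * ((m+1 : ℕ) : ℝ) / Real.log μ by positivity)
      calc (⌊θ * ((m+1 : ℕ) : ℝ) / Real.log μ⌋₊ : ℝ) * Real.log μ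
          ≤ (θ * ((m+1 : ℕ) : ℝ) / Real.log μ) * Real.log μ :=
            mul_le_mul_of_nonneg_right h hln.le
        _ = θ * ((m+1 : ℕ) : ℝ) := by field_simp
    have h2 : (μ:ℝ) ^ (⌊θ * ((m+1 : ℕ) : ℝ) / Real.log μ⌋₊) ≤
        Real.exp (θ * ((m+1 : ℕ) : ℝ)) := by
      calc (μ:ℝ) ^ (⌊θ * ((m+1 : ℕ) : ℝ) / Real.log μ⌋₊)
          = Real.exp ((⌊θ * ((m+1 : ℕ) : ℝ) / Real.log μ⌋₊ : ℝ) * Real.log μ) := by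
            rw [Real.exp_nat_mul, Real.exp_log hμ0]
        _ ≤ Real.exp (θ * ((m+1 : ℕ) : ℝ)) := Real.exp_le_exp.2 hfl
    have hθm1 : θ * ((m+1 : ℕ) : ℝ) ≤ θ * (t + 1) := by
      apply mul_le_mul_of_nonneg_left _ hθ1.le
      push_cast
      have : (m:ℝ) ≤ t := Nat.floor_le ht0
      linarith
    have hμN : μ ^ (N ω t) ≤ μ ^ M * Real.exp (θ * (t + 1)) := by
      calc μ ^ (N ω t) ≤ μ ^ (M + ⌊θ * ((m+1 : ℕ) : ℝ) / Real.log μ⌋₊) :=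
            pow_le_pow_right₀ hμ.le hNle2
        _ = μ ^ M * μ ^ (⌊θ * ((m+1 : ℕ) : ℝ) / Real.log μ⌋₊) := pow_add μ _ _
        _ ≤ μ ^ M * Real.exp (θ * ((m+1 : ℕ) : ℝ)) :=
            mul_le_mul_of_nonneg_left h2 (by positivity)
        _ ≤ μ ^ M * Real.exp (θ * (t + 1)) :=
            mul_le_mul_of_nonneg_left (Real.exp_le_exp.2 hθm1) (by positivity)
    have hPWt := hPW ω t ht0
    have hα := (hsandwich (σ ω t) (X ω t)).1
    have hfinal : μ ^ (N ω t) * Real.exp (-lam₀ * t) * C ≤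
        D * Real.exp (-((lam₀ - θ) * t)) := by
      have he : (0:ℝ) < Real.exp (-lam₀ * t) := Real.exp_pos _
      calc μ ^ (N ω t) * Real.exp (-lam₀ * t) * C
          ≤ (μ ^ M * Real.exp (θ * (t + 1))) * Real.exp (-lam₀ * t) * C := by
            apply mul_le_mul_of_nonneg_right _ hCnn
            exact mul_le_mul_of_nonneg_right hμN he.le
        _ = D * Real.exp (-((lam₀ - θ) * t)) := by
            rw [hD]
            rw [show (-((lam₀ - θ) * t)) = θ * (t+1) + (-lam₀ * t) + -θ by ring,
              Real.exp_add, Real.exp_add, Real.exp_neg]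
            have := Real.exp_pos θ
            field_simp
    exact hα.trans (hPWt.trans hfinal)
  have hten : Tendsto (fun t : ℝ => D * Real.exp (-((lam₀ - θ) * t))) atTop (nhds 0) := by
    have h1 : Tendsto (fun t : ℝ => (lam₀ - θ) * t) atTop atTop :=
      tendsto_id.const_mul_atTop (by linarith)
    have h2 := Real.tendsto_exp_neg_atTop_nhds_zero.comp h1
    have h3 := h2.const_mul D
    simpa using h3
  have hα₁X : Tendsto (fun t => α₁ ‖X ω t‖) atTop (nhds 0) :=
    squeeze_zero' (Filter.Eventually.of_forall fun t => hα₁nn _ (norm_nonneg _)) hbound hten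
  rw [NormedAddCommGroup.tendsto_nhds_zero]
  intro ε hε
  have hαε : 0 < α₁ ε := by
    have := hα₁mono (Set.mem_Ici.2 le_rfl) (Set.mem_Ici.2 hε.le) hε
    rwa [hα₁0] at this
  filter_upwards [hα₁X.eventually (gt_mem_nhds hαε)] with t ht
  by_contra h
  push_neg at h
  have := hα₁mono.monotoneOn (Set.mem_Ici.2 hε.le) (Set.mem_Ici.2 (norm_nonneg _)) h
  linarith
end

section
/- Under the hypotheses of the almost-sure GAS theorem (conditions (i)–(v) with V_p, α₁, α₂, λ₀, λ̃, λ̄, μ), the system additionally satisfies almost sure Lyapunov stability: with probability one, for every ε > 0 there is δ > 0 such that ‖x₀‖ < δ implies sup_{t≥0} ‖x(t)‖ < ε. -/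
open Real Set Filter MeasureTheory

/-- Exponential decay of a Lyapunov function along a trajectory on an interval. -/
lemma lyap_decay_on_interval {E : Type*} [NormedAddCommGroup E] [NormedSpace ℝ E]
    {Vp : E → ℝ} (hV : ContDiff ℝ 1 Vp) {x g : ℝ → E} {lam a b : ℝ}
    (hx : ContinuousOn x (Icc a b))
    (hx' : ∀ t ∈ Ioo a b, HasDerivAt x (g t) t)
    (hd : ∀ t ∈ Ioo a b, fderiv ℝ Vp (x t) (g t) ≤ -lam * Vp (x t))
    (hab : a ≤ b) :
    ∀ t ∈ Icc a b, Real.exp (lam * t) * Vp (x t) ≤ Real.exp (lam * a) * Vp (x a) := by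
  set h : ℝ → ℝ := fun s => Real.exp (lam * s) * Vp (x s) with hh
  have hderiv : ∀ t ∈ Ioo a b, HasDerivAt h
      (Real.exp (lam * t) * lam * Vp (x t) +
        Real.exp (lam * t) * (fderiv ℝ Vp (x t) (g t))) t := by
    intro t ht
    have h1 : HasDerivAt (fun s : ℝ => Real.exp (lam * s)) (Real.exp (lam * t) * lam) t := by
      simpa using ((hasDerivAt_id t).const_mul lam).exp
    have h2 : HasDerivAt (fun s => Vp (x s)) (fderiv ℝ Vp (x t) (g t)) t :=
      (((hV.differentiable one_ne_zero) (x t)).hasFDerivAt).comp_hasDerivAt t (hx' t ht)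
    exact h1.mul h2
  have hanti : AntitoneOn h (Icc a b) := by
    apply antitoneOn_of_deriv_nonpos (convex_Icc a b)
    · exact (Real.continuous_exp.comp (continuous_const.mul continuous_id)).continuousOn.mul
        (hV.continuous.comp_continuousOn hx)
    · rw [interior_Icc]
      exact fun t ht => (hderiv t ht).differentiableAt.differentiableWithinAt
    · rw [interior_Icc]
      intro t ht
      rw [(hderiv t ht).deriv]
      have hb := hd t ht
      have he : (0:ℝ) < Real.exp (lam * t) := Real.exp_pos _
      nlinarith [mul_le_mul_of_nonneg_left hb he.le]
  intro t ht
  exact hanti ⟨le_rfl, hab⟩ ht ht.1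

/-- Tail of the exponential series is bounded by the exponential. -/
lemma tsum_tail_le_exp {x : ℝ} (hx : 0 ≤ x) (K : ℕ) :
    ∑' j : ℕ, x ^ (K + j) / (Nat.factorial (K + j)) ≤ Real.exp x := by
  apply Real.tsum_le_of_sum_range_le (fun n => by positivity)
  intro n
  have h1 : ∑ j ∈ Finset.range n, x ^ (K + j) / (Nat.factorial (K + j))
      ≤ ∑ i ∈ Finset.range (K + n), x ^ i / (Nat.factorial i) := by
    rw [Finset.sum_range_add (fun i => x ^ i / (Nat.factorial i)) K n]
    have : (0:ℝ) ≤ ∑ i ∈ Finset.range K, x ^ i / (Nat.factorial i) := by positivity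
    linarith
  exact h1.trans (Real.sum_le_exp_of_nonneg hx _)

/-- Stability part of GAS a.s.: under the hypotheses of the main theorem, with
probability one, for every `ε > 0` there is `δ > 0` such that `‖x₀‖ < δ` implies
`sup_{t ≥ 0} ‖x(t)‖ < ε`. -/
theorem randomly_switched_as_stability
    {n : ℕ} {P : Type*} [Finite P]
    {Ω : Type*} [MeasurableSpace Ω] (ℙ : Measure Ω) [IsProbabilityMeasure ℙ]
    (f : P → EuclideanSpace ℝ (Fin n) → EuclideanSpace ℝ (Fin n))
    (hf : ∀ p, LocallyLipschitz (f p)) (hf0 : ∀ p, f p 0 = 0)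
    (V : P → EuclideanSpace ℝ (Fin n) → ℝ)
    (hVC1 : ∀ p, ContDiff ℝ 1 (V p))
    (α₁ α₂ : ℝ → ℝ)
    (hα₁cont : Continuous α₁) (hα₁mono : StrictMonoOn α₁ (Set.Ici 0))
    (hα₁0 : α₁ 0 = 0) (hα₁inf : Filter.Tendsto α₁ Filter.atTop Filter.atTop)
    (hα₂cont : Continuous α₂) (hα₂mono : StrictMonoOn α₂ (Set.Ici 0))
    (hα₂0 : α₂ 0 = 0) (hα₂inf : Filter.Tendsto α₂ Filter.atTop Filter.atTop)
    (lam₀ lamTilde lamBar μ : ℝ) (M : ℕ)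
    (hlam : 0 < lam₀) (hlt : 0 < lamTilde) (hlb : 0 < lamBar) (hμ : 1 < μ)
    -- (i) class-K∞ sandwich
    (hsandwich : ∀ p y, α₁ ‖y‖ ≤ V p y ∧ V p y ≤ α₂ ‖y‖)
    -- (ii) decay of each subsystem
    (hdecay : ∀ p y, fderiv ℝ (V p) y (f p y) ≤ -lam₀ * V p y)
    -- (iii) ratio bound
    (hratio : ∀ p₁ p₂ y, V p₁ y ≤ μ * V p₂ y)
    -- the randomly switched system: solutions from every initial condition
    (σ : Ω → ℝ → P) (N : Ω → ℝ → ℕ) (τ : Ω → ℕ → ℝ)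
    (X : EuclideanSpace ℝ (Fin n) → Ω → ℝ → EuclideanSpace ℝ (Fin n))
    (hτ0 : ∀ ω, τ ω 0 = 0) (hτmono : ∀ ω, StrictMono (τ ω))
    (hτdiv : ∀ ω, Filter.Tendsto (τ ω) Filter.atTop Filter.atTop)
    (hσ : ∀ ω, ∀ i : ℕ, ∀ t ∈ Set.Ico (τ ω i) (τ ω (i + 1)), σ ω t = σ ω (τ ω i))
    (hN : ∀ ω, ∀ t : ℝ, 0 ≤ t → τ ω (N ω t) ≤ t ∧ t < τ ω (N ω t + 1))
    (hx0 : ∀ x₀ ω, X x₀ ω 0 = x₀) (hxcont : ∀ x₀ ω, Continuous (X x₀ ω))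
    (hsol : ∀ x₀ ω, ∀ t : ℝ, 0 ≤ t → t ∉ Set.range (τ ω) →
      HasDerivAt (X x₀ ω) (f (σ ω t) (X x₀ ω t)) t)
    (hNmeas : ∀ t : ℝ, Measurable (fun ω => N ω t))
    -- (iv) pmf tail bound on the switch count
    (hpmf : ∀ t : ℝ, 0 ≤ t → ∀ k : ℕ, M ≤ k →
      ℙ {ω | N ω t = k} ≤
        ENNReal.ofReal (Real.exp (-lamTilde * t) * (lamBar * t) ^ k / (Nat.factorial k)))
    -- (v) slow switching
    (hslow : μ < (lam₀ + lamTilde) / lamBar) :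
    ∀ᵐ ω ∂ℙ, ∀ ε : ℝ, 0 < ε → ∃ δ : ℝ, 0 < δ ∧
      ∀ x₀ : EuclideanSpace ℝ (Fin n), ‖x₀‖ < δ →
        ∀ t : ℝ, 0 ≤ t → ‖X x₀ ω t‖ < ε := by
  classical
  have hμ0 : (0:ℝ) < μ := lt_trans one_pos hμ
  have hlog : 0 < Real.log μ := Real.log_pos hμ
  set K : ℕ → ℕ := fun m => M + Nat.ceil (lam₀ * m / Real.log μ) with hKdef
  -- lower bound μ ^ K m ≥ exp (lam₀ m)
  have hKlb : ∀ m : ℕ, Real.exp (lam₀ * m) ≤ μ ^ K m := by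
    intro m
    have h1 : lam₀ * m / Real.log μ ≤ (Nat.ceil (lam₀ * m / Real.log μ) : ℝ) := Nat.le_ceil _
    have h2 : lam₀ * m ≤ (K m : ℝ) * Real.log μ := by
      have h1' := mul_le_mul_of_nonneg_right h1 hlog.le
      rw [div_mul_cancel₀ _ hlog.ne'] at h1'
      have h3 : ((Nat.ceil (lam₀ * m / Real.log μ) : ℕ) : ℝ) ≤ (K m : ℝ) := by
        exact_mod_cast Nat.le_add_left _ M
      nlinarith
    calc Real.exp (lam₀ * m) ≤ Real.exp ((K m : ℝ) * Real.log μ) := Real.exp_le_exp.2 h2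
      _ = μ ^ K m := by rw [Real.exp_nat_mul, Real.exp_log hμ0]
  -- upper bound μ ^ K m ≤ μ^(M+1) exp (lam₀ m)
  have hKub : ∀ m : ℕ, (μ:ℝ) ^ K m ≤ μ ^ (M+1) * Real.exp (lam₀ * m) := by
    intro m
    have hcm : (Nat.ceil (lam₀ * m / Real.log μ) : ℝ) ≤ lam₀ * m / Real.log μ + 1 :=
      (Nat.ceil_lt_add_one (by positivity)).le
    have h2 : ((Nat.ceil (lam₀ * m / Real.log μ) : ℕ) : ℝ) * Real.log μ
        ≤ lam₀ * m + Real.log μ := by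
      have h1' := mul_le_mul_of_nonneg_right hcm hlog.le
      rw [add_mul, div_mul_cancel₀ _ hlog.ne', one_mul] at h1'
      exact h1'
    have h4 : (μ:ℝ) ^ (Nat.ceil (lam₀ * m / Real.log μ)) ≤ μ * Real.exp (lam₀ * m) := by
      calc (μ:ℝ) ^ (Nat.ceil (lam₀ * m / Real.log μ))
          = Real.exp (((Nat.ceil (lam₀ * m / Real.log μ) : ℕ) : ℝ) * Real.log μ) := by
            rw [Real.exp_nat_mul, Real.exp_log hμ0]
        _ ≤ Real.exp (lam₀ * m + Real.log μ) := Real.exp_le_exp.2 h2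
        _ = μ * Real.exp (lam₀ * m) := by rw [Real.exp_add, Real.exp_log hμ0]; ring
    calc (μ:ℝ) ^ K m = μ ^ M * μ ^ (Nat.ceil (lam₀ * m / Real.log μ)) := by
          rw [hKdef]; exact pow_add μ M _
      _ ≤ μ ^ M * (μ * Real.exp (lam₀ * m)) :=
          mul_le_mul_of_nonneg_left h4 (by positivity)
      _ = μ ^ (M+1) * Real.exp (lam₀ * m) := by rw [pow_succ]; ring
  -- the bad events and Borel–Cantelli
  set S : ℕ → Set Ω := fun m => {ω | K m ≤ N ω (m:ℝ)} with hSdef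
  have hSbound : ∀ m : ℕ,
      ℙ (S m) ≤ ENNReal.ofReal (Real.exp ((μ * lamBar - lamTilde - lam₀) * m)) := by
    intro m
    have hm0 : (0:ℝ) ≤ (m:ℝ) := Nat.cast_nonneg m
    have hcover : S m ⊆ ⋃ j : ℕ, {ω | N ω (m:ℝ) = K m + j} := by
      intro ω hω
      exact Set.mem_iUnion.2 ⟨N ω (m:ℝ) - K m, by
        simp only [Set.mem_setOf_eq]
        have : K m ≤ N ω (m:ℝ) := hω
        omega⟩
    have h1 : ℙ (S m) ≤ ∑' j : ℕ, ℙ {ω | N ω (m:ℝ) = K m + j} :=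
      (measure_mono hcover).trans (measure_iUnion_le _)
    set a : ℕ → ℝ := fun j =>
      Real.exp (-lamTilde * m) * (lamBar * m) ^ (K m + j) / (Nat.factorial (K m + j)) with ha
    have h2 : ∀ j : ℕ, ℙ {ω | N ω (m:ℝ) = K m + j} ≤ ENNReal.ofReal (a j) := by
      intro j
      exact hpmf (m:ℝ) hm0 (K m + j)
        (le_trans (Nat.le_add_right M _) (Nat.le_add_right _ j))
    have hanon : ∀ j, 0 ≤ a j := fun j => by positivity
    have hs1 : Summable (fun j : ℕ => (lamBar * m) ^ (K m + j) / (Nat.factorial (K m + j))) := by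
      have hs2 := (summable_nat_add_iff (f := fun k : ℕ => (lamBar * (m:ℝ)) ^ k /
        (Nat.factorial k)) (K m)).2 (Real.summable_pow_div_factorial _)
      simpa [add_comm] using hs2
    have hasum : Summable a := by
      have := hs1.mul_left (Real.exp (-lamTilde * m))
      simpa [ha, mul_div_assoc] using this
    have h3 : ∑' j, ℙ {ω | N ω (m:ℝ) = K m + j} ≤ ENNReal.ofReal (∑' j, a j) := by
      rw [ENNReal.ofReal_tsum_of_nonneg hanon hasum]
      exact ENNReal.tsum_le_tsum h2
    -- real estimate
    set b : ℕ → ℝ := fun j =>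
      Real.exp (-lamTilde * m) * ((μ ^ K m)⁻¹ *
        ((μ * (lamBar * m)) ^ (K m + j) / (Nat.factorial (K m + j)))) with hb
    have hbsum : Summable b := by
      have hs3 := (summable_nat_add_iff (f := fun k : ℕ => (μ * (lamBar * (m:ℝ))) ^ k /
        (Nat.factorial k)) (K m)).2 (Real.summable_pow_div_factorial _)
      have hs4 : Summable (fun j : ℕ => (μ * (lamBar * (m:ℝ))) ^ (K m + j) /
          (Nat.factorial (K m + j))) := by simpa [add_comm] using hs3
      exact (hs4.mul_left _).mul_left _
    have hterm : ∀ j, a j ≤ b j := by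
      intro j
      have hpowle : (μ:ℝ) ^ K m ≤ μ ^ (K m + j) := pow_le_pow_right₀ hμ.le (Nat.le_add_right _ _)
      have hμK : (0:ℝ) < μ ^ K m := pow_pos hμ0 _
      have e1 : b j = Real.exp (-lamTilde * m) *
          ((μ ^ (K m + j) / μ ^ K m) * ((lamBar * m) ^ (K m + j) / (Nat.factorial (K m + j)))) := by
        rw [hb]; simp only [mul_pow]; ring
      have e2 : (1:ℝ) ≤ μ ^ (K m + j) / μ ^ K m := (one_le_div hμK).2 hpowle
      have e3 : (0:ℝ) ≤ (lamBar * m) ^ (K m + j) / (Nat.factorial (K m + j)) := by positivity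
      rw [e1, ha]
      have := mul_le_mul_of_nonneg_right e2 e3
      rw [one_mul] at this
      have he : (0:ℝ) ≤ Real.exp (-lamTilde * m) := (Real.exp_pos _).le
      calc Real.exp (-lamTilde * m) * (lamBar * m) ^ (K m + j) / (Nat.factorial (K m + j))
          = Real.exp (-lamTilde * m) *
            ((lamBar * m) ^ (K m + j) / (Nat.factorial (K m + j))) := by ring
        _ ≤ Real.exp (-lamTilde * m) *
            ((μ ^ (K m + j) / μ ^ K m) *
              ((lamBar * m) ^ (K m + j) / (Nat.factorial (K m + j)))) :=
            mul_le_mul_of_nonneg_left this he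
    have h4 : ∑' j, a j ≤ Real.exp (-lamTilde * m) *
        ((μ ^ K m)⁻¹ * Real.exp (μ * (lamBar * m))) := by
      have h5 : ∑' j, a j ≤ ∑' j, b j := Summable.tsum_le_tsum hterm hasum hbsum
      have h6 : ∑' j, b j = Real.exp (-lamTilde * m) * ((μ ^ K m)⁻¹ *
          ∑' j, (μ * (lamBar * m)) ^ (K m + j) / (Nat.factorial (K m + j))) := by
        rw [hb, tsum_mul_left, tsum_mul_left]
      have h7 := tsum_tail_le_exp (x := μ * (lamBar * (m:ℝ))) (by positivity) (K m)
      have hμKinv : (0:ℝ) ≤ (μ ^ K m)⁻¹ := by positivity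
      have he : (0:ℝ) ≤ Real.exp (-lamTilde * m) := (Real.exp_pos _).le
      calc ∑' j, a j ≤ ∑' j, b j := h5
        _ = _ := h6
        _ ≤ Real.exp (-lamTilde * m) * ((μ ^ K m)⁻¹ * Real.exp (μ * (lamBar * m))) := by
            apply mul_le_mul_of_nonneg_left _ he
            exact mul_le_mul_of_nonneg_left h7 hμKinv
    have h8 : Real.exp (-lamTilde * m) * ((μ ^ K m)⁻¹ * Real.exp (μ * (lamBar * m)))
        ≤ Real.exp ((μ * lamBar - lamTilde - lam₀) * m) := by
      have hi : (μ ^ K m : ℝ)⁻¹ ≤ Real.exp (-(lam₀ * m)) := by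
        rw [Real.exp_neg]
        exact inv_anti₀ (Real.exp_pos _) (hKlb m)
      calc Real.exp (-lamTilde * m) * ((μ ^ K m)⁻¹ * Real.exp (μ * (lamBar * m)))
          ≤ Real.exp (-lamTilde * m) * (Real.exp (-(lam₀ * m)) * Real.exp (μ * (lamBar * m))) := by
            apply mul_le_mul_of_nonneg_left _ (Real.exp_pos _).le
            exact mul_le_mul_of_nonneg_right hi (Real.exp_pos _).le
        _ = Real.exp ((μ * lamBar - lamTilde - lam₀) * m) := by
            rw [← Real.exp_add, ← Real.exp_add]; ring_nf
    calc ℙ (S m) ≤ ∑' j : ℕ, ℙ {ω | N ω (m:ℝ) = K m + j} := h1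
      _ ≤ ENNReal.ofReal (∑' j, a j) := h3
      _ ≤ ENNReal.ofReal (Real.exp ((μ * lamBar - lamTilde - lam₀) * m)) :=
          ENNReal.ofReal_le_ofReal (h4.trans h8)
  -- summability of the bad-event probabilities
  set r : ℝ := Real.exp (μ * lamBar - lamTilde - lam₀) with hrdef
  have hrlt : μ * lamBar - lamTilde - lam₀ < 0 := by
    have h := (lt_div_iff₀ hlb).mp hslow
    linarith
  have hr1 : r < 1 := by
    rw [hrdef]
    exact Real.exp_lt_one_iff.2 hrlt
  have hr0 : (0:ℝ) ≤ r := (Real.exp_pos _).le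
  have hSsum : ∑' m, ℙ (S m) ≠ ⊤ := by
    have hS2 : ∀ m : ℕ, ℙ (S m) ≤ (ENNReal.ofReal r) ^ m := by
      intro m
      have : Real.exp ((μ * lamBar - lamTilde - lam₀) * m) = r ^ m := by
        rw [hrdef, show (μ * lamBar - lamTilde - lam₀) * (m:ℝ)
          = (m:ℝ) * (μ * lamBar - lamTilde - lam₀) from mul_comm _ _, Real.exp_nat_mul]
      rw [← ENNReal.ofReal_pow hr0, ← this]
      exact hSbound m
    have h9 : ∑' m, ℙ (S m) ≤ ∑' m : ℕ, (ENNReal.ofReal r) ^ m := ENNReal.tsum_le_tsum hS2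
    rw [ENNReal.tsum_geometric] at h9
    refine ne_top_of_le_ne_top ?_ h9
    rw [Ne, ENNReal.inv_eq_top, tsub_eq_zero_iff_le]
    exact not_le.2 (ENNReal.ofReal_lt_one.2 hr1)
  have hae := MeasureTheory.ae_eventually_notMem (μ := ℙ) hSsum
  filter_upwards [hae] with ω hω
  obtain ⟨m₀, hm₀⟩ := Filter.eventually_atTop.1 hω
  -- the a.s. deterministic bound on μ^{N(t)} e^{-λ₀ t}
  have hNKm : ∀ m : ℕ, m₀ ≤ m → N ω (m:ℝ) < K m := by
    intro m hm
    have := hm₀ m hm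
    simp only [hSdef, Set.mem_setOf_eq] at this
    omega
  have hNmono : ∀ s t : ℝ, 0 ≤ s → s ≤ t → N ω s ≤ N ω t := by
    intro s t hs hst
    have h1 := (hN ω s hs).1
    have h2 := (hN ω t (hs.trans hst)).2
    have h3 : τ ω (N ω s) < τ ω (N ω t + 1) := lt_of_le_of_lt (h1.trans hst) h2
    exact Nat.lt_succ_iff.1 ((hτmono ω).lt_iff_lt.1 h3)
  set Cω : ℝ := μ ^ (M+1) * Real.exp (lam₀ * (1 + m₀)) with hCdef
  have hCpos : 0 < Cω := by positivity
  have hCbound : ∀ t : ℝ, 0 ≤ t → (μ:ℝ) ^ (N ω t) * Real.exp (-(lam₀ * t)) ≤ Cω := by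
    intro t ht
    set m : ℕ := max (Nat.ceil t) m₀ with hm
    have htm : t ≤ (m:ℝ) := by
      refine le_trans (Nat.le_ceil t) ?_
      exact_mod_cast Nat.le_max_left _ _
    have hmle : (m:ℝ) ≤ t + 1 + m₀ := by
      rw [hm, Nat.cast_max]
      apply max_le
      · have h1 := (Nat.ceil_lt_add_one ht).le
        have h2 : (0:ℝ) ≤ (m₀:ℝ) := Nat.cast_nonneg _
        linarith
      · have h2 : (0:ℝ) ≤ (m₀:ℝ) := Nat.cast_nonneg _
        linarith
    have hNle : N ω t ≤ N ω (m:ℝ) := hNmono t (m:ℝ) ht htm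
    have hNlt : N ω (m:ℝ) < K m := hNKm m (Nat.le_max_right _ _)
    have h5 : (μ:ℝ) ^ N ω t ≤ μ ^ K m := pow_le_pow_right₀ hμ.le (by omega)
    have h6 := hKub m
    calc (μ:ℝ) ^ N ω t * Real.exp (-(lam₀ * t))
        ≤ (μ ^ (M+1) * Real.exp (lam₀ * m)) * Real.exp (-(lam₀ * t)) :=
          mul_le_mul_of_nonneg_right (h5.trans h6) (Real.exp_pos _).le
      _ = μ ^ (M+1) * Real.exp (lam₀ * m + -(lam₀ * t)) := by
          rw [Real.exp_add]; ring
      _ ≤ Cω := by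
          rw [hCdef]
          apply mul_le_mul_of_nonneg_left _ (by positivity)
          apply Real.exp_le_exp.2
          nlinarith
  -- positivity and basic facts
  have hVnonneg : ∀ p y, 0 ≤ V p y := by
    intro p y
    have h1 : α₁ 0 ≤ α₁ ‖y‖ :=
      hα₁mono.monotoneOn (Set.self_mem_Ici) (norm_nonneg y) (norm_nonneg y)
    rw [hα₁0] at h1
    exact h1.trans (hsandwich p y).1
  have hτnonneg : ∀ i : ℕ, 0 ≤ τ ω i := by
    intro i
    have := (hτmono ω).monotone (Nat.zero_le i)
    rwa [hτ0 ω] at this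
  intro ε hε
  have hα₁ε : 0 < α₁ ε := by
    have := hα₁mono (Set.self_mem_Ici) (le_of_lt hε) hε
    rwa [hα₁0] at this
  obtain ⟨δ, hδpos, hδ⟩ := Metric.continuousAt_iff.1 hα₂cont.continuousAt (α₁ ε / Cω)
    (by positivity)
  refine ⟨δ, hδpos, ?_⟩
  intro x₀ hx₀ t ht
  have hα₂x₀ : α₂ ‖x₀‖ < α₁ ε / Cω := by
    have hd1 : dist ‖x₀‖ (0:ℝ) < δ := by
      rw [Real.dist_eq, sub_zero, abs_of_nonneg (norm_nonneg _)]
      exact hx₀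
    have := hδ hd1
    rw [hα₂0, Real.dist_eq, sub_zero] at this
    exact lt_of_le_of_lt (le_abs_self _) this
  -- Lyapunov decay along the trajectory
  set x : ℝ → EuclideanSpace ℝ (Fin n) := X x₀ ω with hxdef
  have hint : ∀ i : ℕ, ∀ s ∈ Icc (τ ω i) (τ ω (i+1)),
      Real.exp (lam₀ * s) * V (σ ω (τ ω i)) (x s) ≤
      Real.exp (lam₀ * (τ ω i)) * V (σ ω (τ ω i)) (x (τ ω i)) := by
    intro i
    apply lyap_decay_on_interval (hVC1 _) (g := fun s => f (σ ω (τ ω i)) (x s))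
      ((hxcont x₀ ω).continuousOn)
    · intro s hs
      have hne : s ∉ Set.range (τ ω) := by
        rintro ⟨j, rfl⟩
        rcases le_or_gt j i with hj | hj
        · exact absurd (((hτmono ω).monotone hj).trans_lt hs.1) (lt_irrefl _)
        · exact absurd (((hτmono ω).monotone hj).trans_lt' hs.2) (lt_irrefl _)
      have hs0 : 0 ≤ s := le_trans (hτnonneg i) hs.1.le
      have hsolv := hsol x₀ ω s hs0 hne
      rw [hσ ω i s ⟨hs.1.le, hs.2⟩] at hsolv
      exact hsolv
    · intro s hs
      exact hdecay _ _
    · exact (hτmono ω).monotone (Nat.le_succ i)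
  have hchain : ∀ i : ℕ, Real.exp (lam₀ * τ ω i) * V (σ ω (τ ω i)) (x (τ ω i)) ≤
      μ ^ i * V (σ ω 0) x₀ := by
    intro i
    induction i with
    | zero =>
      rw [hτ0 ω]
      simp [hxdef, hx0 x₀ ω]
    | succ i ih =>
      have hstep := hint i (τ ω (i+1)) ⟨(hτmono ω).monotone (Nat.le_succ i), le_rfl⟩
      have hrat : V (σ ω (τ ω (i+1))) (x (τ ω (i+1))) ≤
          μ * V (σ ω (τ ω i)) (x (τ ω (i+1))) := hratio _ _ _
      calc Real.exp (lam₀ * τ ω (i+1)) * V (σ ω (τ ω (i+1))) (x (τ ω (i+1)))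
          ≤ Real.exp (lam₀ * τ ω (i+1)) * (μ * V (σ ω (τ ω i)) (x (τ ω (i+1)))) :=
            mul_le_mul_of_nonneg_left hrat (Real.exp_pos _).le
        _ = μ * (Real.exp (lam₀ * τ ω (i+1)) * V (σ ω (τ ω i)) (x (τ ω (i+1)))) := by ring
        _ ≤ μ * (Real.exp (lam₀ * τ ω i) * V (σ ω (τ ω i)) (x (τ ω i))) :=
            mul_le_mul_of_nonneg_left hstep hμ0.le
        _ ≤ μ * (μ ^ i * V (σ ω 0) x₀) := mul_le_mul_of_nonneg_left ih hμ0.le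
        _ = μ ^ (i+1) * V (σ ω 0) x₀ := by rw [pow_succ]; ring
  -- conclude compared values at time t
  have hmain : α₁ ‖x t‖ ≤ Cω * α₂ ‖x₀‖ := by
    obtain ⟨hτle, hτlt⟩ := hN ω t ht
    have hσt : σ ω t = σ ω (τ ω (N ω t)) := hσ ω (N ω t) t ⟨hτle, hτlt⟩
    have h7 := hint (N ω t) t ⟨hτle, hτlt.le⟩
    have h8 := hchain (N ω t)
    have h9 : Real.exp (lam₀ * t) * V (σ ω t) (x t) ≤ μ ^ (N ω t) * V (σ ω 0) x₀ := by
      rw [hσt]; exact h7.trans h8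
    have he : (0:ℝ) < Real.exp (lam₀ * t) := Real.exp_pos _
    have h10 : V (σ ω t) (x t) ≤ μ ^ (N ω t) * Real.exp (-(lam₀ * t)) * V (σ ω 0) x₀ := by
      have h11 := (le_div_iff₀' he).2 h9
      have h12 : μ ^ (N ω t) * V (σ ω 0) x₀ / Real.exp (lam₀ * t)
          = μ ^ (N ω t) * Real.exp (-(lam₀ * t)) * V (σ ω 0) x₀ := by
        rw [Real.exp_neg]; field_simp
      rwa [h12] at h11
    have h13 : V (σ ω 0) x₀ ≤ α₂ ‖x₀‖ := (hsandwich _ _).2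
    have h14 := hCbound t ht
    calc α₁ ‖x t‖ ≤ V (σ ω t) (x t) := (hsandwich _ _).1
      _ ≤ μ ^ (N ω t) * Real.exp (-(lam₀ * t)) * V (σ ω 0) x₀ := h10
      _ ≤ Cω * α₂ ‖x₀‖ := by
          apply mul_le_mul h14 h13 (hVnonneg _ _) hCpos.le
  have hfin : α₁ ‖x t‖ < α₁ ε := by
    have h15 : Cω * α₂ ‖x₀‖ < Cω * (α₁ ε / Cω) := mul_lt_mul_of_pos_left hα₂x₀ hCpos
    rw [mul_div_cancel₀ _ hCpos.ne'] at h15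
    exact lt_of_le_of_lt hmain h15
  by_contra hcon
  push_neg at hcon
  have := hα₁mono.monotoneOn (le_of_lt hε) (le_trans (le_of_lt hε) hcon) hcon
  linarith
end
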